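/- arXiv:1508.07217 — 3 statements merged into one kernel-verified Lean document; each statement's English description precedes it below -/
import Mathlib

section
/- Let f be an isomorphism of anti-twinned graphs R(G) → R(H) and let v be a vertex of G with f(v') ≠ f(v)'. Then the map g obtained from f by swapping the images of v' and f⁻¹(f(v)') (i.e., g(v') = f(v)', g(f⁻¹(f(v)')) = f(v'), and g = f elsewhere) is again an isomorphism of R(G) to R(H). -/
/-- An oriented graph: a loopless digraph with no 2-cycles (arc relation is asymmetric). -/
structure OGraph (V : Type) where
  arc : V → V → Prop
  asymm : ∀ u v, arc u v → ¬ arc v u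

namespace OGraph

/-- Pushing a set `S` of vertices reverses exactly the arcs with exactly one endpoint in `S`. -/
def push {V : Type} (G : OGraph V) (S : Set V) : OGraph V where
  arc u v := (Xor' (u ∈ S) (v ∈ S) ∧ G.arc v u) ∨ (¬ Xor' (u ∈ S) (v ∈ S) ∧ G.arc u v)
  asymm := by
    intro u v h h'
    have h1 := G.asymm u v
    have h2 := G.asymm v u
    unfold Xor' Xor at h h'
    tauto

/-- Homomorphism of oriented graphs. -/
def IsHom {V W : Type} (G : OGraph V) (H : OGraph W) (f : V → W) : Prop :=
  ∀ u v, G.arc u v → H.arc (f u) (f v)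

/-- Isomorphism of oriented graphs along an equivalence. -/
def IsIso {V W : Type} (G : OGraph V) (H : OGraph W) (e : V ≃ W) : Prop :=
  ∀ u v, G.arc u v ↔ H.arc (e u) (e v)

/-- The anti-twinned graph `R(G)` on two copies of the vertices:
`inl` is the original copy, `inr` the pushed (primed) copy. -/
def antiTwin {V : Type} (G : OGraph V) : OGraph (V ⊕ V) where
  arc x y :=
    match x, y with
    | Sum.inl u, Sum.inl v => G.arc u v
    | Sum.inr u, Sum.inr v => G.arc u v
    | Sum.inl u, Sum.inr v => G.arc v u
    | Sum.inr u, Sum.inl v => G.arc v u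
  asymm := by
    rintro (u | u) (v | v) h h' <;> exact G.asymm _ _ h h'

/-- The anti-twin of a vertex of `R(G)`: `x'` with `x'' = x`. -/
def tw {V : Type} : V ⊕ V → V ⊕ V := Sum.elim Sum.inr Sum.inl

/-- `H` is an orientation of the simple graph `G`. -/
def IsOrientationOf {V : Type} (H : OGraph V) (G : SimpleGraph V) : Prop :=
  (∀ u v, H.arc u v → G.Adj u v) ∧ (∀ u v, G.Adj u v → H.arc u v ∨ H.arc v u)

end OGraph

/-- The directed 3-cycle. -/
def C3 : OGraph (Fin 3) where
  arc u v := v = u + 1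
  asymm := by decide


lemma tw_arc_left {V : Type} (G : OGraph V) (x y : V ⊕ V) :
    G.antiTwin.arc (OGraph.tw x) y ↔ G.antiTwin.arc y x := by
  cases x <;> cases y <;> exact Iff.rfl

lemma tw_arc_right {V : Type} (G : OGraph V) (x y : V ⊕ V) :
    G.antiTwin.arc y (OGraph.tw x) ↔ G.antiTwin.arc x y := by
  cases x <;> cases y <;> exact Iff.rfl

lemma swap_auto {W : Type} [DecidableEq W] (H : OGraph W) (a b : W)
    (h1 : ∀ y, H.arc a y ↔ H.arc b y) (h2 : ∀ y, H.arc y a ↔ H.arc y b)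
    (p q : W) : H.arc p q ↔ H.arc (Equiv.swap a b p) (Equiv.swap a b q) := by
  simp only [Equiv.swap_apply_def]
  split_ifs <;> subst_vars <;>
    first
    | rfl
    | (constructor <;> intro h <;>
        solve
        | exact (h1 _).mp ((h2 _).mp h)
        | exact (h1 _).mpr ((h2 _).mpr h)
        | exact (h1 _).mp h
        | exact (h1 _).mpr h
        | exact (h2 _).mp h
        | exact (h2 _).mpr h
        | exact (h2 _).mp ((h1 _).mp h)
        | exact (h2 _).mpr ((h1 _).mpr h)
        | exact (h1 _).mpr ((h2 _).mp h)
        | exact (h1 _).mp ((h2 _).mpr h)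
        | exact (h2 _).mpr ((h1 _).mp h)
        | exact (h2 _).mp ((h1 _).mpr h))

/-- If `f : R(G) ≃ R(H)` is an isomorphism and `v` is a vertex of `G` with
`f(v') ≠ f(v)'`, then the map `g` obtained from `f` by swapping the images of `v'` and
`f⁻¹(f(v)')` (so `g(v') = f(v)'`, `g(f⁻¹(f(v)')) = f(v')`, `g = f` elsewhere) is again
an isomorphism of `R(G)` to `R(H)`. -/
theorem swap_images_still_iso {V W : Type} [DecidableEq W] (G : OGraph V) (H : OGraph W)
    (f : (V ⊕ V) ≃ (W ⊕ W)) (hf : OGraph.IsIso G.antiTwin H.antiTwin f)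
    (v : V) (hv : f (OGraph.tw (Sum.inl v)) ≠ OGraph.tw (f (Sum.inl v))) :
    OGraph.IsIso G.antiTwin H.antiTwin
      (f.trans (Equiv.swap (f (OGraph.tw (Sum.inl v))) (OGraph.tw (f (Sum.inl v))))) := by
  
  set a := f (OGraph.tw (Sum.inl v)) with ha
  set b := OGraph.tw (f (Sum.inl v)) with hb
  have h1 : ∀ y, H.antiTwin.arc a y ↔ H.antiTwin.arc b y := by
    intro y
    have hy : y = f (f.symm y) := (f.apply_symm_apply y).symm
    rw [hy]
    calc H.antiTwin.arc a (f (f.symm y))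
        ↔ G.antiTwin.arc (OGraph.tw (Sum.inl v)) (f.symm y) := (hf _ _).symm
      _ ↔ G.antiTwin.arc (f.symm y) (Sum.inl v) := tw_arc_left G _ _
      _ ↔ H.antiTwin.arc (f (f.symm y)) (f (Sum.inl v)) := hf _ _
      _ ↔ H.antiTwin.arc b (f (f.symm y)) := (tw_arc_left H _ _).symm
  have h2 : ∀ y, H.antiTwin.arc y a ↔ H.antiTwin.arc y b := by
    intro y
    have hy : y = f (f.symm y) := (f.apply_symm_apply y).symm
    rw [hy]
    calc H.antiTwin.arc (f (f.symm y)) a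
        ↔ G.antiTwin.arc (f.symm y) (OGraph.tw (Sum.inl v)) := (hf _ _).symm
      _ ↔ G.antiTwin.arc (Sum.inl v) (f.symm y) := tw_arc_right G _ _
      _ ↔ H.antiTwin.arc (f (Sum.inl v)) (f (f.symm y)) := hf _ _
      _ ↔ H.antiTwin.arc (f (f.symm y)) b := (tw_arc_right H _ _).symm
  intro x y
  rw [hf x y]
  exact swap_auto H.antiTwin a b h1 h2 (f x) (f y)
end

section
/- For every oriented path a1a2...am of length m−1 ≥ 4 (any orientation of edges) and any assignment ψ of distinct vertices of the directed 3-cycle C3 to a1 and am, one can push a subset of the internal vertices {a2,...,a_{m−1}} so that the resulting oriented path admits a homomorphism to the directed 3-cycle extending ψ. -/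
/-- increment: effective forward edge advances by 1, backward by 2 (mod 3). -/
def inc3 (b : Bool) : Fin 3 := if b then 1 else 2

def PushProp (k : ℕ) : Prop :=
  ∀ (o : ℕ → Bool) (b : Bool) (t : Fin 3), t ≠ 0 →
    ∃ s : ℕ → Bool, s 0 = false ∧ s k = b ∧
      (∑ i ∈ Finset.range k, inc3 (xor (o i) (xor (s i) (s (i+1))))) = t

lemma base4fin : ∀ (o : Fin 4 → Bool) (b : Bool) (t : Fin 3), t ≠ 0 →
    ∃ v : Fin 3 → Bool,
      inc3 (xor (o 0) (xor false (v 0))) + inc3 (xor (o 1) (xor (v 0) (v 1))) +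
      inc3 (xor (o 2) (xor (v 1) (v 2))) + inc3 (xor (o 3) (xor (v 2) b)) = t := by decide

lemma pushProp4 : PushProp 4 := by
  intro o b t ht
  obtain ⟨v, hv⟩ := base4fin (fun i : Fin 4 => o i.val) b t ht
  refine ⟨fun n => if n = 1 then v 0 else if n = 2 then v 1 else if n = 3 then v 2
    else if n = 0 then false else b, by norm_num, by norm_num, ?_⟩
  simp only [Finset.sum_range_succ, Finset.sum_range_zero, zero_add]
  norm_num
  convert hv using 2 <;> norm_num

lemma inc3_exists (x b : Bool) (d : Fin 3) (hd : d ≠ 0) :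
    ∃ c : Bool, inc3 (xor x (xor c b)) = d := by
  revert x b d; decide

lemma pushProp_succ (k : ℕ) (h : PushProp k) : PushProp (k+1) := by
  intro o b t ht
  set t' : Fin 3 := if t = 1 then 2 else 1 with ht'def
  have ht' : t' ≠ 0 := by
    rcases ht'def with _; revert ht; fin_cases t <;> simp [ht'def] <;> decide
  have hd : t - t' ≠ 0 := by
    revert ht; fin_cases t <;> simp [ht'def] <;> decide
  obtain ⟨c, hc⟩ := inc3_exists (o k) b (t - t') hd
  obtain ⟨s, hs0, hsk, hsum⟩ := h o c t' ht'
  refine ⟨fun n => if n ≤ k then s n else b, by simp [hs0], by simp, ?_⟩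
  rw [Finset.sum_range_succ]
  have h1 : (∑ i ∈ Finset.range k,
      inc3 (xor (o i) (xor (if i ≤ k then s i else b) (if i+1 ≤ k then s (i+1) else b)))) = t' := by
    rw [← hsum]
    apply Finset.sum_congr rfl
    intro i hi
    have hik := Finset.mem_range.mp hi
    rw [if_pos (by omega), if_pos (by omega)]
  have h2 : (fun n => if n ≤ k then s n else b) k = c := by
    show (if k ≤ k then s k else b) = c
    rw [if_pos le_rfl, hsk]
  have h3 : (fun n => if n ≤ k then s n else b) (k+1) = b := by
    show (if k + 1 ≤ k then s (k+1) else b) = b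
    rw [if_neg (by omega)]
  rw [h1, h2, h3, hc]
  abel

lemma pushProp_all (k : ℕ) (hk : 4 ≤ k) : PushProp k := by
  induction k, hk using Nat.le_induction with
  | base => exact pushProp4
  | succ n hn ih => exact pushProp_succ n ih

lemma xor_of_Xor' {a b : Bool} (h : Xor' (a = true) (b = true)) : xor a b = true := by
  cases a <;> cases b <;> simp [Xor'] at h ⊢

lemma xor_of_not_Xor' {a b : Bool} (h : ¬ Xor' (a = true) (b = true)) : xor a b = false := by
  cases a <;> cases b <;> simp [Xor'] at h ⊢

/-- For any oriented path on `m` vertices `a₀, …, a_{m-1}` of length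
`m - 1 ≥ 4` and any assignment of distinct vertices of the directed 3-cycle to the two
endpoints, one can push a subset of the internal vertices so that the resulting oriented
path admits a homomorphism to the directed 3-cycle extending that assignment. -/
theorem path_push_hom_to_C3 (m : ℕ) (hm : 5 ≤ m) (G : OGraph (Fin m))
    (hpath_only : ∀ i j : Fin m, G.arc i j → i.val + 1 = j.val ∨ j.val + 1 = i.val)
    (hpath_edges : ∀ i : ℕ, ∀ h : i + 1 < m,
      G.arc ⟨i, Nat.lt_of_succ_lt h⟩ ⟨i + 1, h⟩ ∨ G.arc ⟨i + 1, h⟩ ⟨i, Nat.lt_of_succ_lt h⟩)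
    (ψ₀ ψ₁ : Fin 3) (hψ : ψ₀ ≠ ψ₁) :
    ∃ (S : Set (Fin m)) (f : Fin m → Fin 3),
      (∀ i ∈ S, i ≠ ⟨0, by omega⟩ ∧ i ≠ ⟨m - 1, by omega⟩) ∧
      OGraph.IsHom (G.push S) C3 f ∧
      f ⟨0, by omega⟩ = ψ₀ ∧ f ⟨m - 1, by omega⟩ = ψ₁ := by
  classical
  set o : ℕ → Bool := fun i =>
    if h : i + 1 < m then
      (if G.arc ⟨i, Nat.lt_of_succ_lt h⟩ ⟨i + 1, h⟩ then true else false)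
    else false with ho_def
  have ho_fwd : ∀ (i : ℕ) (h : i + 1 < m),
      G.arc ⟨i, Nat.lt_of_succ_lt h⟩ ⟨i + 1, h⟩ → o i = true := by
    intro i h harc
    simp only [ho_def, dif_pos h, if_pos harc]
  have ho_bwd : ∀ (i : ℕ) (h : i + 1 < m),
      G.arc ⟨i + 1, h⟩ ⟨i, Nat.lt_of_succ_lt h⟩ → o i = false := by
    intro i h harc
    have : ¬ G.arc ⟨i, Nat.lt_of_succ_lt h⟩ ⟨i + 1, h⟩ := G.asymm _ _ harc
    simp only [ho_def, dif_pos h, if_neg this]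
  have ht : ψ₁ - ψ₀ ≠ 0 := sub_ne_zero_of_ne hψ.symm
  obtain ⟨s, hs0, hsk, hsum⟩ := pushProp_all (m - 1) (by omega) o false (ψ₁ - ψ₀) ht
  set S : Set (Fin m) := {v | s v.val = true} with hS_def
  set f : Fin m → Fin 3 := fun v =>
    ψ₀ + ∑ i ∈ Finset.range v.val, inc3 (xor (o i) (xor (s i) (s (i+1)))) with hf_def
  have hstep : ∀ (a b : Fin m), b.val = a.val + 1 →
      f b = f a + inc3 (xor (o a.val) (xor (s a.val) (s (a.val + 1)))) := by
    intro a b hab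
    simp only [hf_def, hab, Finset.sum_range_succ, add_assoc]
  have hmem : ∀ v : Fin m, v ∈ S ↔ s v.val = true := fun v => Iff.rfl
  have key3 : ∀ x : Fin 3, x = x + 2 + 1 := by decide
  refine ⟨S, f, ?_, ?_, ?_, ?_⟩
  · intro i hi
    have hsi : s i.val = true := hi
    constructor
    · intro h; rw [h] at hsi; simp [hs0] at hsi
    · intro h; rw [h] at hsi; simp at hsi; rw [hsk] at hsi; exact Bool.false_ne_true hsi
  · intro u v huv
    rcases huv with ⟨hx, harc⟩ | ⟨hx, harc⟩
    · -- pushed arc: Xor' and G.arc v u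
      have hflip : xor (s u.val) (s v.val) = true := xor_of_Xor' hx
      rcases hpath_only v u harc with hvu | huv'
      · -- v.val + 1 = u.val : backward edge at i = v.val, o = true, flip true, eff false
        have hlt : v.val + 1 < m := by omega
        have ho : o v.val = true := by
          apply ho_fwd v.val hlt
          have : (⟨v.val, Nat.lt_of_succ_lt hlt⟩ : Fin m) = v := rfl
          rw [this]
          have : (⟨v.val + 1, hlt⟩ : Fin m) = u := by ext; simp only [Fin.val_mk]; omega
          rw [this]; exact harc
        have heq := hstep v u (by omega)
        rw [ho] at heq
        have hflip' : xor (s v.val) (s (v.val + 1)) = true := by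
          have : s (v.val + 1) = s u.val := by rw [show v.val + 1 = u.val by omega]
          rw [this, Bool.xor_comm]; exact hflip
        rw [hflip'] at heq
        show f v = f u + 1
        rw [heq]
        show f v = f v + inc3 (xor true true) + 1
        simp only [Bool.xor_self]
        exact key3 (f v)
      · -- u.val + 1 = v.val : forward indexing, G.arc v u means o = false, flip true, eff true
        have hlt : u.val + 1 < m := by omega
        have ho : o u.val = false := by
          apply ho_bwd u.val hlt
          have h1 : (⟨u.val + 1, hlt⟩ : Fin m) = v := by ext; simp only [Fin.val_mk]; omega
          have h2 : (⟨u.val, Nat.lt_of_succ_lt hlt⟩ : Fin m) = u := rfl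
          rw [h1, h2]; exact harc
        have heq := hstep u v (by omega)
        rw [ho] at heq
        have hflip' : xor (s u.val) (s (u.val + 1)) = true := by
          rw [show u.val + 1 = v.val by omega]; exact hflip
        rw [hflip'] at heq
        show f v = f u + 1
        rw [heq]; rfl
    · -- non-pushed arc: G.arc u v
      have hflip : xor (s u.val) (s v.val) = false := xor_of_not_Xor' hx
      rcases hpath_only u v harc with huv' | hvu
      · -- u.val + 1 = v.val : forward edge, o true, flip false, eff true
        have hlt : u.val + 1 < m := by omega
        have ho : o u.val = true := by
          apply ho_fwd u.val hlt
          have h1 : (⟨u.val + 1, hlt⟩ : Fin m) = v := by ext; simp only [Fin.val_mk]; omega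
          have h2 : (⟨u.val, Nat.lt_of_succ_lt hlt⟩ : Fin m) = u := rfl
          rw [h1, h2]; exact harc
        have heq := hstep u v (by omega)
        rw [ho] at heq
        have hflip' : xor (s u.val) (s (u.val + 1)) = false := by
          rw [show u.val + 1 = v.val by omega]; exact hflip
        rw [hflip'] at heq
        show f v = f u + 1
        rw [heq]; rfl
      · -- v.val + 1 = u.val : backward edge, o false (since arc u v = arc (i+1) i), eff false
        have hlt : v.val + 1 < m := by omega
        have ho : o v.val = false := by
          apply ho_bwd v.val hlt
          have h1 : (⟨v.val + 1, hlt⟩ : Fin m) = u := by ext; simp only [Fin.val_mk]; omega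
          have h2 : (⟨v.val, Nat.lt_of_succ_lt hlt⟩ : Fin m) = v := rfl
          rw [h1, h2]; exact harc
        have heq := hstep v u (by omega)
        rw [ho] at heq
        have hflip' : xor (s v.val) (s (v.val + 1)) = false := by
          have : s (v.val + 1) = s u.val := by rw [show v.val + 1 = u.val by omega]
          rw [this, Bool.xor_comm]; exact hflip
        rw [hflip'] at heq
        show f v = f u + 1
        rw [heq]
        show f v = f v + inc3 (xor false false) + 1
        simp only [Bool.xor_self]
        exact key3 (f v)
  · simp [hf_def]
  · show ψ₀ + _ = ψ₁
    simp only []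
    rw [hsum]
    abel
end

section
/- Every orientation of every outerplanar graph with girth at least 5 can be pushed (reversing arcs at some vertex set) to admit a homomorphism to the directed 3-cycle; hence the push chromatic number of the family of outerplanar graphs of girth at least 5 is 3 (and it is at least 3 because odd cycles have push chromatic number at least 3). -/
/-- A finite graph is outerplanar iff its vertices can be placed (injectively) on a line
(equivalently, on a circle with all vertices on the outer face) so that no two edges
cross: there are no edges `ab`, `cd` with `a < c < b < d` in the order. -/
def IsOuterplanar {V : Type} (G : SimpleGraph V) : Prop :=
  ∃ f : V → ℕ, Function.Injective f ∧
    ∀ a b c d : V, G.Adj a b → G.Adj c d → ¬ (f a < f c ∧ f c < f b ∧ f b < f d)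


section AuxPush

def stp (b : Bool) (u v : ZMod 6) : Prop :=
  if b then (v - u = 1 ∨ v - u = 2) else (u - v = 1 ∨ u - v = 2)

instance (b : Bool) (u v : ZMod 6) : Decidable (stp b u v) := by
  unfold stp; infer_instance

lemma stp_shift (b : Bool) (u v c : ZMod 6) : stp b (u + c) (v + c) ↔ stp b u v := by
  simp [stp, add_sub_add_right_eq_sub]

lemma W4' : ∀ (d : ZMod 6), d ≠ 0 → d ≠ 3 → ∀ p1 p2 p3 p4 : Bool,
    ∃ z1 z2 z3, stp p1 0 z1 ∧ stp p2 z1 z2 ∧ stp p3 z2 z3 ∧ stp p4 z3 d := by decide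

lemma Wpick : ∀ (x y : ZMod 6) (b : Bool), ∃ z, stp b z y ∧ z - x ≠ 0 ∧ z - x ≠ 3 := by decide

lemma W4 : ∀ (x y : ZMod 6), y - x ≠ 0 → y - x ≠ 3 → ∀ p1 p2 p3 p4 : Bool,
    ∃ z1 z2 z3, stp p1 x z1 ∧ stp p2 z1 z2 ∧ stp p3 z2 z3 ∧ stp p4 z3 y := by
  intro x y h0 h3 p1 p2 p3 p4
  obtain ⟨z1, z2, z3, hA, hB, hC, hD⟩ := W4' (y - x) h0 h3 p1 p2 p3 p4
  refine ⟨z1 + x, z2 + x, z3 + x, ?_, ?_, ?_, ?_⟩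
  · simpa using (stp_shift p1 0 z1 x).mpr hA
  · exact (stp_shift p2 z1 z2 x).mpr hB
  · exact (stp_shift p3 z2 z3 x).mpr hC
  · have := (stp_shift p4 z3 (y - x) x).mpr hD
    simpa [sub_add_cancel] using this

lemma W5 : ∀ (x y : ZMod 6) (p1 p2 p3 p4 p5 : Bool),
    ∃ z1 z2 z3 z4, stp p1 x z1 ∧ stp p2 z1 z2 ∧ stp p3 z2 z3 ∧ stp p4 z3 z4 ∧ stp p5 z4 y := by
  intro x y p1 p2 p3 p4 p5
  obtain ⟨z4, hz4, h0, h3⟩ := Wpick x y p5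
  obtain ⟨z1, z2, z3, hA, hB, hC, hD⟩ := W4 x z4 h0 h3 p1 p2 p3 p4
  exact ⟨z1, z2, z3, z4, hA, hB, hC, hD, hz4⟩


def cZ (z : ZMod 6) : Fin 3 := ⟨2 * z.val % 3, Nat.mod_lt _ (by norm_num)⟩

lemma LA : ∀ p q : ZMod 6, (p - q = 1 ∨ p - q = 2) →
    Xor' (p.val % 2 = 1) (q.val % 2 = 1) → cZ q = cZ p + 1 := by unfold Xor' Xor; decide

lemma LB : ∀ p q : ZMod 6, (q - p = 1 ∨ q - p = 2) →
    ¬ Xor' (p.val % 2 = 1) (q.val % 2 = 1) → cZ q = cZ p + 1 := by unfold Xor' Xor; decide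

lemma diffne : ∀ d : ZMod 6, ((d = 1 ∨ d = 2) ∨ (-d = 1 ∨ -d = 2)) → d ≠ 0 ∧ d ≠ 3 := by decide


open SimpleGraph

lemma cycles_long {V : Type} (G : SimpleGraph V) (hg : 5 ≤ G.girth) :
    ∀ (a : V) (w : G.Walk a a), w.IsCycle → 5 ≤ w.length := by
  intro a w hw
  have hne : ¬G.IsAcyclic := fun h => h w hw
  have h1 : G.egirth ≤ w.length := le_egirth.mp le_rfl a w hw
  have h2 : G.egirth ≠ ⊤ := by
    rw [ne_eq, egirth_eq_top]; exact hne
  obtain ⟨g, hg'⟩ := Option.ne_none_iff_exists'.mp h2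
  have hgg : G.girth = g := by rw [SimpleGraph.girth, hg']; rfl
  rw [hg'] at h1
  have : (5 : ℕ∞) ≤ g := by exact_mod_cast hgg ▸ hg
  exact_mod_cast this.trans h1

lemma girth_ge_of {V : Type} (G : SimpleGraph V) (hcyc : ¬G.IsAcyclic)
    (hall : ∀ (a : V) (w : G.Walk a a), w.IsCycle → 5 ≤ w.length) : 5 ≤ G.girth := by
  have h2 : G.egirth ≠ ⊤ := by rw [ne_eq, egirth_eq_top]; exact hcyc
  have h5 : (5 : ℕ∞) ≤ G.egirth := le_egirth.mpr (by exact_mod_cast hall)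
  obtain ⟨g, hg'⟩ := Option.ne_none_iff_exists'.mp h2
  have hgg : G.girth = g := by rw [SimpleGraph.girth, hg']; rfl
  rw [hg'] at h5
  rw [hgg]
  have : (5 : ℕ∞) ≤ (g : ℕ∞) := h5
  exact_mod_cast this

lemma noC3_of_girth {V : Type} (G : SimpleGraph V) (hg : 5 ≤ G.girth) :
    ∀ a b c : V, G.Adj a b → G.Adj b c → G.Adj c a → False := by
  intro a b c hab hbc hca
  have n1 : a ≠ b := hab.ne
  have n2 : b ≠ c := hbc.ne
  have n3 : c ≠ a := hca.ne
  have hw : (Walk.cons hab (Walk.cons hbc (Walk.cons hca Walk.nil))).IsCycle := by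
    rw [Walk.isCycle_def, Walk.isTrail_def]
    refine ⟨?_, by simp, ?_⟩ <;> simp [Sym2.eq_iff] <;> aesop
  have := cycles_long G hg a _ hw
  simp [Walk.length_cons] at this

lemma noC4_of_girth {V : Type} (G : SimpleGraph V) (hg : 5 ≤ G.girth) :
    ∀ a b c d : V, a ≠ c → b ≠ d → G.Adj a b → G.Adj b c → G.Adj c d → G.Adj d a → False := by
  intro a b c d hac hbd hab hbc hcd hda
  have n1 : a ≠ b := hab.ne
  have n2 : b ≠ c := hbc.ne
  have n3 : c ≠ d := hcd.ne
  have n4 : d ≠ a := hda.ne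
  have hw : (Walk.cons hab (Walk.cons hbc (Walk.cons hcd (Walk.cons hda Walk.nil)))).IsCycle := by
    rw [Walk.isCycle_def, Walk.isTrail_def]
    refine ⟨?_, by simp, ?_⟩ <;> simp [Sym2.eq_iff] <;> aesop
  have := cycles_long G hg a _ hw
  simp [Walk.length_cons] at this


def Gr5 : SimpleGraph (Fin 5) where
  Adj i j := j = i + 1 ∨ i = j + 1
  symm := ⟨fun _ _ h => h.symm⟩
  loopless := ⟨fun i h =>
    (by decide : ∀ i : Fin 5, ¬(i = i + 1 ∨ i = i + 1)) i h⟩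

def H5 : OGraph (Fin 5) where
  arc i j := j = i + 1
  asymm := by decide

lemma H5orient : OGraph.IsOrientationOf H5 Gr5 :=
  ⟨fun _ _ h => Or.inl h, fun _ _ h => h⟩

instance : DecidableRel Gr5.Adj :=
  fun i j => inferInstanceAs (Decidable (j = i + 1 ∨ i = j + 1))

lemma Gr5outer : IsOuterplanar Gr5 := by
  refine ⟨Fin.val, Fin.val_injective, ?_⟩
  decide

lemma xor'_symm {p q : Prop} (h : Xor' p q) : Xor' q p := h.symm

lemma part2tight : ∀ (W : Type) [Fintype W], Fintype.card W ≤ 2 →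
    ∀ (K : OGraph W) (S : Set (Fin 5)) (f : Fin 5 → W),
      ¬ OGraph.IsHom (H5.push S) K f := by
  classical
  intro W _ hcard K S f hom
  set Q : Fin 5 → Prop := fun i => Xor' (i ∈ S) ((i + 1) ∈ S) with hQ
  have hex : ∃ i : Fin 5, (Q i ↔ Q (i + 1)) := by
    by_contra hc
    push_neg at hc
    have h0 := hc 0; have h1 := hc 1; have h2 := hc 2; have h3 := hc 3; have h4 := hc 4
    have e0 : (0 : Fin 5) + 1 = 1 := by decide
    have e1 : (1 : Fin 5) + 1 = 2 := by decide
    have e2 : (2 : Fin 5) + 1 = 3 := by decide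
    have e3 : (3 : Fin 5) + 1 = 4 := by decide
    have e4 : (4 : Fin 5) + 1 = 0 := by decide
    rw [e0] at h0; rw [e1] at h1; rw [e2] at h2; rw [e3] at h3; rw [e4] at h4
    tauto
  obtain ⟨i, hi⟩ := hex
  have e1 : H5.arc i (i + 1) := rfl
  have e2 : H5.arc (i + 1) (i + 1 + 1) := rfl
  -- produce a "through" vertex m = i+1 with arcs x → m → z in the pushed graph
  have hthrough : ∃ x z : Fin 5, (H5.push S).arc x (i + 1) ∧ (H5.push S).arc (i + 1) z := by
    by_cases hq : Q i
    · exact ⟨i + 1 + 1, i, Or.inl ⟨xor'_symm (hi.mp hq), e2⟩, Or.inl ⟨xor'_symm hq, e1⟩⟩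
    · exact ⟨i, i + 1 + 1, Or.inr ⟨hq, e1⟩, Or.inr ⟨fun h => hq (hi.mpr h), e2⟩⟩
  obtain ⟨x, z, A1, A2⟩ := hthrough
  have K1 := hom _ _ A1
  have K2 := hom _ _ A2
  have hxm : f x ≠ f (i + 1) := by
    intro he; rw [he] at K1; exact K.asymm _ _ K1 K1
  have hzm : f z ≠ f (i + 1) := by
    intro he; rw [he] at K2; exact K.asymm _ _ K2 K2
  have hxz : f x = f z := by
    by_contra hne
    have hc3 : ({f x, f (i+1), f z} : Finset W).card = 3 := by
      rw [Finset.card_insert_of_notMem (by simp [hxm, hne]),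
        Finset.card_insert_of_notMem (by simp [Ne.symm hzm]), Finset.card_singleton]
    have h4 : ({f x, f (i+1), f z} : Finset W).card ≤ Fintype.card W :=
      (Finset.card_le_univ _).trans (le_of_eq Finset.card_univ)
    rw [hc3] at h4
    omega
  rw [hxz] at K1
  exact K.asymm _ _ K1 K2

lemma gr5_nocycle34 : ∀ (a : Fin 5) (w : Gr5.Walk a a), w.IsCycle → w.length ≠ 3 ∧ w.length ≠ 4 := by
  intro a w hw
  constructor <;> intro hlen
  · cases w with
    | nil => simp at hlen
    | cons h1 w1 => cases w1 with
      | nil => simp at hlen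
      | cons h2 w2 => cases w2 with
        | nil => simp at hlen
        | cons h3 w3 => cases w3 with
          | nil =>
            exact (by decide : ∀ x y z : Fin 5, ¬(Gr5.Adj x y ∧ Gr5.Adj y z ∧ Gr5.Adj z x))
              _ _ _ ⟨h1, h2, h3⟩
          | cons h4 w4 => simp [Walk.length_cons] at hlen
  · cases w with
    | nil => simp at hlen
    | cons h1 w1 => cases w1 with
      | nil => simp at hlen
      | cons h2 w2 => cases w2 with
        | nil => simp at hlen
        | cons h3 w3 => cases w3 with
          | nil => simp at hlen
          | cons h4 w4 => cases w4 with
            | nil =>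
              rw [Walk.isCycle_def] at hw
              have hnd := hw.2.2
              simp [Walk.support_cons] at hnd
              exact (by decide : ∀ x y z t : Fin 5, y ≠ t → x ≠ z →
                  ¬(Gr5.Adj x y ∧ Gr5.Adj y z ∧ Gr5.Adj z t ∧ Gr5.Adj t x))
                _ _ _ _ (by tauto) (by tauto) ⟨h1, h2, h3, h4⟩
            | cons h5 w5 => simp [Walk.length_cons] at hlen

def w5 : Gr5.Walk 0 0 :=
  Walk.cons (u := 0) (v := 1) (Or.inl (by decide))
    (Walk.cons (u := 1) (v := 2) (Or.inl (by decide))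
      (Walk.cons (u := 2) (v := 3) (Or.inl (by decide))
        (Walk.cons (u := 3) (v := 4) (Or.inl (by decide))
          (Walk.cons (u := 4) (v := 0) (Or.inl (by decide)) Walk.nil))))

lemma w5_cycle : w5.IsCycle := by
  rw [Walk.isCycle_def, Walk.isTrail_def]
  refine ⟨?_, by simp [w5]; exact Walk.not_nil_cons, ?_⟩ <;> simp [w5, Sym2.eq_iff] <;> decide

lemma gr5girth : 5 ≤ Gr5.girth := by
  apply girth_ge_of
  · exact fun hac => hac w5 w5_cycle
  · intro a w hw
    have h3 := hw.three_le_length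
    have h34 := gr5_nocycle34 a w hw
    omega

lemma main_lemma {n : ℕ} (Gr : SimpleGraph (Fin n)) (H : OGraph (Fin n))
    (fl : Fin n → ℕ) (finj : Function.Injective fl)
    (nc : ∀ a b c d : Fin n, Gr.Adj a b → Gr.Adj c d →
      ¬ (fl a < fl c ∧ fl c < fl b ∧ fl b < fl d))
    (orient : OGraph.IsOrientationOf H Gr)
    (noC3 : ∀ a b c : Fin n, Gr.Adj a b → Gr.Adj b c → Gr.Adj c a → False)
    (noC4 : ∀ a b c d : Fin n, a ≠ c → b ≠ d →
      Gr.Adj a b → Gr.Adj b c → Gr.Adj c d → Gr.Adj d a → False) :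
    ∀ (m : ℕ) (s : Finset (Fin n)), s.card ≤ m →
      ∃ h : Fin n → ZMod 6, ∀ u v, u ∈ s → v ∈ s → H.arc u v →
        (h v - h u = 1 ∨ h v - h u = 2) := by
  classical
  intro m
  induction m with
  | zero =>
    intro s hs
    have : s = ∅ := Finset.card_eq_zero.mp (Nat.le_zero.mp hs)
    subst this
    exact ⟨fun _ => 0, by simp⟩
  | succ m ih =>
    intro s hs
    rcases s.eq_empty_or_nonempty with rfl | hne
    · exact ⟨fun _ => 0, by simp⟩
    by_cases hdeg : ∃ v ∈ s, ((s.filter (fun w => Gr.Adj v w)).card ≤ 1)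
    · -- low degree case
      obtain ⟨v, hv, hd⟩ := hdeg
      obtain ⟨h, hh⟩ := ih (s.erase v)
        (by rw [Finset.card_erase_of_mem hv]; omega)
      by_cases hex : ∃ w ∈ s, Gr.Adj v w
      · obtain ⟨w, hws, hadj⟩ := hex
        have hwv : w ≠ v := hadj.ne'
        have huniq : ∀ w' ∈ s, Gr.Adj v w' → w' = w := by
          intro w' hw' hadj'
          exact Finset.card_le_one.mp hd w' (Finset.mem_filter.mpr ⟨hw', hadj'⟩)
            w (Finset.mem_filter.mpr ⟨hws, hadj⟩)
        refine ⟨Function.update h v (if H.arc v w then h w - 1 else h w + 1), ?_⟩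
        intro q r hq hr harc
        have hGadj := orient.1 q r harc
        by_cases hqv : q = v
        · subst hqv
          have hrq : r = w := huniq r hr hGadj
          subst hrq
          have harcvw : H.arc q r := harc
          rw [Function.update_of_ne (hadj.ne') _ _, Function.update_self, if_pos harcvw]
          left; ring
        · by_cases hrv : r = v
          · subst hrv
            have hq' : q = w := huniq q hq hGadj.symm
            subst hq'
            have : ¬ H.arc r q := H.asymm _ _ harc
            rw [Function.update_self, Function.update_of_ne hqv _ _, if_neg this]
            left; ring
          · rw [Function.update_of_ne hrv _ _, Function.update_of_ne hqv _ _]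
            exact hh q r (Finset.mem_erase.mpr ⟨hqv, hq⟩) (Finset.mem_erase.mpr ⟨hrv, hr⟩) harc
      · push_neg at hex
        refine ⟨h, ?_⟩
        intro q r hq hr harc
        have hGadj := orient.1 q r harc
        by_cases hqv : q = v
        · exact absurd hGadj (by rw [hqv]; exact fun h' => hex r hr h')
        · by_cases hrv : r = v
          · exact absurd hGadj.symm (by rw [hrv]; exact fun h' => hex q hq h')
          · exact hh q r (Finset.mem_erase.mpr ⟨hqv, hq⟩) (Finset.mem_erase.mpr ⟨hrv, hr⟩) harc
    · -- min degree ≥ 2 case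
      push_neg at hdeg
      -- min degree ≥ 2 case: find an "ear" and use the walk-extension lemmas
      obtain ⟨mx, hmxs, hmx⟩ := s.exists_max_image fl hne
      have hmx2 := hdeg mx hmxs
      obtain ⟨w1, hw1, w2, hw2, hww⟩ := Finset.one_lt_card.mp hmx2
      rw [Finset.mem_filter] at hw1 hw2
      set E := (s ×ˢ s).filter
        (fun p => Gr.Adj p.1 p.2 ∧ ∃ z ∈ s, fl p.1 < fl z ∧ fl z < fl p.2) with hE
      have hEne : E.Nonempty := by
        have hne12 : fl w1 ≠ fl w2 := fun h => hww (finj h)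
        rcases lt_or_gt_of_ne hne12 with hlt | hgt
        · refine ⟨(w1, mx), ?_⟩
          rw [hE, Finset.mem_filter, Finset.mem_product]
          exact ⟨⟨hw1.1, hmxs⟩, hw1.2.symm,
            w2, hw2.1, hlt, lt_of_le_of_ne (hmx w2 hw2.1) (fun h => hw2.2.ne' (finj h))⟩
        · refine ⟨(w2, mx), ?_⟩
          rw [hE, Finset.mem_filter, Finset.mem_product]
          exact ⟨⟨hw2.1, hmxs⟩, hw2.2.symm,
            w1, hw1.1, hgt, lt_of_le_of_ne (hmx w1 hw1.1) (fun h => hw1.2.ne' (finj h))⟩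
      obtain ⟨ab, habE, hmin⟩ := E.exists_min_image (fun p => fl p.2 - fl p.1) hEne
      obtain ⟨a, b⟩ := ab
      rw [hE, Finset.mem_filter, Finset.mem_product] at habE
      obtain ⟨⟨has, hbs⟩, hab, z0, hz0s, hz01, hz02⟩ := habE
      have hfab : fl a < fl b := hz01.trans hz02
      have hminE : ∀ u v : Fin n, u ∈ s → v ∈ s → Gr.Adj u v →
          (∃ z ∈ s, fl u < fl z ∧ fl z < fl v) → fl b - fl a ≤ fl v - fl u := by
        intro u v hu hv huv hz
        refine hmin (u, v) ?_
        rw [hE, Finset.mem_filter, Finset.mem_product]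
        exact ⟨⟨hu, hv⟩, huv, hz⟩
      have empty_inside : ∀ u v : Fin n, u ∈ s → v ∈ s → Gr.Adj u v →
          fl a ≤ fl u → fl u < fl v → fl v ≤ fl b → (u ≠ a ∨ v ≠ b) →
          ∀ z ∈ s, ¬(fl u < fl z ∧ fl z < fl v) := by
        intro u v hu hv huv h1 h2 h3 hnab z hz hzin
        have hle := hminE u v hu hv huv ⟨z, hz, hzin.1, hzin.2⟩
        have heq : fl u = fl a ∧ fl v = fl b := by omega
        rcases hnab with hq | hq
        · exact hq (finj heq.1)
        · exact hq (finj heq.2)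
      have range : ∀ v, fl a < fl v → fl v < fl b → ∀ w ∈ s, Gr.Adj v w →
          fl a ≤ fl w ∧ fl w ≤ fl b := by
        intro v hva hvb w hw hvw
        constructor
        · by_contra hcon
          push_neg at hcon
          exact nc w v a b hvw.symm hab ⟨hcon, hva, hvb⟩
        · by_contra hcon
          push_neg at hcon
          exact nc a b v w hab hvw ⟨hva, hvb, hcon⟩
      have side_left : ∀ v, v ∈ s → fl a < fl v → fl v < fl b → ∀ x y, x ∈ s → y ∈ s →
          Gr.Adj v x → Gr.Adj v y → fl x < fl y → fl y < fl v → False := by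
        intro v hv hva hvb x y hx hy hax hay hxy hyv
        have hrx := range v hva hvb x hx hax
        exact empty_inside x v hx hv hax.symm hrx.1 (hxy.trans hyv) (le_of_lt hvb)
          (Or.inr (fun hq => (ne_of_lt hvb) (congrArg fl hq))) y hy ⟨hxy, hyv⟩
      have side_right : ∀ v, v ∈ s → fl a < fl v → fl v < fl b → ∀ x y, x ∈ s → y ∈ s →
          Gr.Adj v x → Gr.Adj v y → fl v < fl x → fl x < fl y → False := by
        intro v hv hva hvb x y hx hy hax hay hvx hxy
        have hry := range v hva hvb y hy hay
        exact empty_inside v y hv hy hay (le_of_lt hva) (hvx.trans hxy) hry.2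
          (Or.inl (fun hq => (ne_of_gt hva) (congrArg fl hq))) x hx ⟨hvx, hxy⟩
      have two_nbrs : ∀ v, v ∈ s → fl a < fl v → fl v < fl b →
          ∃ L, L ∈ s ∧ ∃ R, R ∈ s ∧ Gr.Adj v L ∧ Gr.Adj v R ∧
            fl a ≤ fl L ∧ fl L < fl v ∧ fl v < fl R ∧ fl R ≤ fl b ∧
            (∀ z ∈ s, ¬(fl L < fl z ∧ fl z < fl v)) ∧
            (∀ z ∈ s, ¬(fl v < fl z ∧ fl z < fl R)) ∧
            (∀ w ∈ s, Gr.Adj v w → w = L ∨ w = R) := by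
        intro v hv hva hvb
        have mk : ∀ L R, L ∈ s → R ∈ s → Gr.Adj v L → Gr.Adj v R →
            fl L < fl v → fl v < fl R →
            ∃ L', L' ∈ s ∧ ∃ R', R' ∈ s ∧ Gr.Adj v L' ∧ Gr.Adj v R' ∧
              fl a ≤ fl L' ∧ fl L' < fl v ∧ fl v < fl R' ∧ fl R' ≤ fl b ∧
              (∀ z ∈ s, ¬(fl L' < fl z ∧ fl z < fl v)) ∧
              (∀ z ∈ s, ¬(fl v < fl z ∧ fl z < fl R')) ∧
              (∀ w ∈ s, Gr.Adj v w → w = L' ∨ w = R') := by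
          intro L R hLs hRs hadjL hadjR hLv hvR
          have hrL := range v hva hvb L hLs hadjL
          have hrR := range v hva hvb R hRs hadjR
          refine ⟨L, hLs, R, hRs, hadjL, hadjR, hrL.1, hLv, hvR, hrR.2, ?_, ?_, ?_⟩
          · exact empty_inside L v hLs hv hadjL.symm hrL.1 hLv (le_of_lt hvb)
              (Or.inr (fun hq => (ne_of_lt hvb) (congrArg fl hq)))
          · exact empty_inside v R hv hRs hadjR (le_of_lt hva) hvR hrR.2
              (Or.inl (fun hq => (ne_of_gt hva) (congrArg fl hq)))
          · intro w hw hadjw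
            have hwv : fl w ≠ fl v := fun hq => hadjw.ne' (finj hq)
            rcases lt_or_gt_of_ne hwv with hlt | hgt
            · left
              by_contra hq
              have : fl w ≠ fl L := fun hq2 => hq (finj hq2)
              rcases lt_or_gt_of_ne this with h2 | h2
              · exact (side_left v hv hva hvb w L hw hLs hadjw hadjL h2 hLv).elim
              · exact (side_left v hv hva hvb L w hLs hw hadjL hadjw h2 hlt).elim
            · right
              by_contra hq
              have : fl w ≠ fl R := fun hq2 => hq (finj hq2)
              rcases lt_or_gt_of_ne this with h2 | h2
              · exact (side_right v hv hva hvb w R hw hRs hadjw hadjR hgt h2).elim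
              · exact (side_right v hv hva hvb R w hRs hw hadjR hadjw hvR h2).elim
        obtain ⟨x1, hx1, x2, hx2, hx12⟩ := Finset.one_lt_card.mp (hdeg v hv)
        rw [Finset.mem_filter] at hx1 hx2
        have hx1v : fl x1 ≠ fl v := fun hq => hx1.2.ne' (finj hq)
        have hx2v : fl x2 ≠ fl v := fun hq => hx2.2.ne' (finj hq)
        have hfx : fl x1 ≠ fl x2 := fun hq => hx12 (finj hq)
        rcases lt_or_gt_of_ne hx1v with h1 | h1 <;> rcases lt_or_gt_of_ne hx2v with h2 | h2
        · rcases lt_or_gt_of_ne hfx with h3 | h3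
          · exact (side_left v hv hva hvb x1 x2 hx1.1 hx2.1 hx1.2 hx2.2 h3 h2).elim
          · exact (side_left v hv hva hvb x2 x1 hx2.1 hx1.1 hx2.2 hx1.2 h3 h1).elim
        · exact mk x1 x2 hx1.1 hx2.1 hx1.2 hx2.2 h1 h2
        · exact mk x2 x1 hx2.1 hx1.1 hx2.2 hx1.2 h2 h1
        · rcases lt_or_gt_of_ne hfx with h3 | h3
          · exact (side_right v hv hva hvb x1 x2 hx1.1 hx2.1 hx1.2 hx2.2 h1 h3).elim
          · exact (side_right v hv hva hvb x2 x1 hx2.1 hx1.1 hx2.2 hx1.2 h2 h3).elim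
      -- the chain u1 u2 u3 (u4) starting after a
      set I := s.filter (fun z => fl a < fl z ∧ fl z < fl b) with hI
      have hIne : I.Nonempty := ⟨z0, by rw [hI, Finset.mem_filter]; exact ⟨hz0s, hz01, hz02⟩⟩
      obtain ⟨u1, hu1I, hu1m⟩ := I.exists_min_image fl hIne
      have hu1m' : ∀ z ∈ s, fl a < fl z → fl z < fl b → fl u1 ≤ fl z := by
        intro z hz h1 h2
        exact hu1m z (by rw [hI, Finset.mem_filter]; exact ⟨hz, h1, h2⟩)
      rw [hI, Finset.mem_filter] at hu1I
      obtain ⟨hu1s, hu1a, hu1b⟩ := hu1I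
      obtain ⟨L1, hL1s, R1, hR1s, hadjL1, hadjR1, hL1a, hL1u, hu1R, hR1b, hembL1, hembR1, huniq1⟩ :=
        two_nbrs u1 hu1s hu1a hu1b
      have hL1a' : L1 = a := by
        by_contra hLa
        have h1 : fl a < fl L1 := lt_of_le_of_ne hL1a (fun hq => hLa (finj hq.symm))
        exact absurd (hu1m' L1 hL1s h1 (hL1u.trans hu1b)) (by omega)
      rw [hL1a'] at hadjL1 hembL1 huniq1
      by_cases hR1b' : R1 = b
      · exact (noC3 a u1 b hadjL1.symm (hR1b' ▸ hadjR1) hab.symm).elim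
      have hu2b : fl R1 < fl b := lt_of_le_of_ne hR1b (fun hq => hR1b' (finj hq))
      have hu2a : fl a < fl R1 := hu1a.trans hu1R
      obtain ⟨L2, hL2s, R2, hR2s, hadjL2, hadjR2, hL2a, hL2u, hu2R, hR2b, hembL2, hembR2, huniq2⟩ :=
        two_nbrs R1 hR1s hu2a hu2b
      have hL2' : L2 = u1 := by
        by_contra hq
        have hne2 : fl L2 ≠ fl u1 := fun hq2 => hq (finj hq2)
        rcases lt_or_gt_of_ne hne2 with hlt | hgt
        · exact (hembL2 u1 hu1s ⟨hlt, hu1R⟩).elim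
        · exact (hembR1 L2 hL2s ⟨hgt, hL2u⟩).elim
      rw [hL2'] at hadjL2 hembL2 huniq2
      by_cases hR2b' : R2 = b
      · refine (noC4 a u1 R1 b ?_ ?_ hadjL1.symm hadjR1 (hR2b' ▸ hadjR2) hab.symm).elim
        · exact fun hq => (ne_of_lt hu2a) (congrArg fl hq)
        · exact fun hq => (ne_of_lt hu1b) (congrArg fl hq)
      have hu3b : fl R2 < fl b := lt_of_le_of_ne hR2b (fun hq => hR2b' (finj hq))
      have hu3a : fl a < fl R2 := hu2a.trans hu2R
      obtain ⟨L3, hL3s, R3, hR3s, hadjL3, hadjR3, hL3a, hL3u, hu3R, hR3b, hembL3, hembR3, huniq3⟩ :=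
        two_nbrs R2 hR2s hu3a hu3b
      have hL3' : L3 = R1 := by
        by_contra hq
        have hne3 : fl L3 ≠ fl R1 := fun hq2 => hq (finj hq2)
        rcases lt_or_gt_of_ne hne3 with hlt | hgt
        · exact (hembL3 R1 hR1s ⟨hlt, hu2R⟩).elim
        · exact (hembR2 L3 hL3s ⟨hgt, hL3u⟩).elim
      rw [hL3'] at hadjL3 hembL3 huniq3
      by_cases hR3b' : R3 = b
      · -- CASE A : 5-face a u1 R1 R2 b
        rw [hR3b'] at hadjR3 huniq3
        have d_au1 : a ≠ u1 := fun hq => (ne_of_lt hu1a) (congrArg fl hq)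
        have d_au2 : a ≠ R1 := fun hq => (ne_of_lt hu2a) (congrArg fl hq)
        have d_au3 : a ≠ R2 := fun hq => (ne_of_lt hu3a) (congrArg fl hq)
        have d_bu1 : b ≠ u1 := fun hq => (ne_of_lt hu1b) (congrArg fl hq).symm
        have d_bu2 : b ≠ R1 := fun hq => (ne_of_lt hu2b) (congrArg fl hq).symm
        have d_bu3 : b ≠ R2 := fun hq => (ne_of_lt hu3b) (congrArg fl hq).symm
        have d_12 : u1 ≠ R1 := fun hq => (ne_of_lt hu1R) (congrArg fl hq)
        have d_13 : u1 ≠ R2 := fun hq => (ne_of_lt (hu1R.trans hu2R)) (congrArg fl hq)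
        have d_23 : R1 ≠ R2 := fun hq => (ne_of_lt hu2R) (congrArg fl hq)
        set s' := s \ {u1, R1, R2} with hs'
        have hcard' : s'.card ≤ m := by
          have hsub : s' ⊆ s.erase u1 := by
            intro x hx
            rw [hs', Finset.mem_sdiff] at hx
            rw [Finset.mem_erase]
            refine ⟨?_, hx.1⟩
            intro hq; exact hx.2 (by rw [hq]; simp)
          have hcc := Finset.card_le_card hsub
          rw [Finset.card_erase_of_mem hu1s] at hcc
          omega
        obtain ⟨h, hh⟩ := ih s' hcard'
        have ha' : a ∈ s' := by
          rw [hs', Finset.mem_sdiff]; exact ⟨has, by simp [d_au1, d_au2, d_au3]⟩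
        have hb' : b ∈ s' := by
          rw [hs', Finset.mem_sdiff]; exact ⟨hbs, by simp [d_bu1, d_bu2, d_bu3]⟩
        have hdne : h b - h a ≠ 0 ∧ h b - h a ≠ 3 := by
          apply diffne
          rcases orient.2 a b hab with h1 | h1
          · exact Or.inl (hh a b ha' hb' h1)
          · refine Or.inr ?_; rw [neg_sub]; exact hh b a hb' ha' h1
        obtain ⟨z1, z2, z3, S1, S2, S3, S4⟩ := W4 (h a) (h b) hdne.1 hdne.2
          (if H.arc a u1 then true else false) (if H.arc u1 R1 then true else false)
          (if H.arc R1 R2 then true else false) (if H.arc R2 b then true else false)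
        have stp_spec : ∀ (x y : Fin n) (zx zy : ZMod 6),
            stp (if H.arc x y then true else false) zx zy →
            (H.arc x y → (zy - zx = 1 ∨ zy - zx = 2)) ∧
            (H.arc y x → (zx - zy = 1 ∨ zx - zy = 2)) := by
          intro x y zx zy hst
          constructor
          · intro hxy; rw [if_pos hxy] at hst; simpa [stp] using hst
          · intro hyx; rw [if_neg (H.asymm _ _ hyx)] at hst; simpa [stp] using hst
        set h' : Fin n → ZMod 6 :=
          fun w => if w = u1 then z1 else if w = R1 then z2 else if w = R2 then z3 else h w
          with hh'
        have e1 : h' u1 = z1 := by rw [hh']; simp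
        have e2 : h' R1 = z2 := by rw [hh']; simp [Ne.symm d_12]
        have e3 : h' R2 = z3 := by rw [hh']; simp [Ne.symm d_13, Ne.symm d_23]
        have eo : ∀ w, w ≠ u1 → w ≠ R1 → w ≠ R2 → h' w = h w := by
          intro w q1 q2 q3; rw [hh']; simp [q1, q2, q3]
        have ea : h' a = h a := eo a d_au1 d_au2 d_au3
        have eb : h' b = h b := eo b d_bu1 d_bu2 d_bu3
        refine ⟨h', ?_⟩
        intro q r hqs hrs harc
        have hGadj := orient.1 q r harc
        by_cases hq1 : q = u1
        · rw [hq1] at harc hGadj ⊢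
          rcases huniq1 r hrs hGadj with hx | hx <;> rw [hx] at harc ⊢
          · rw [ea, e1]; exact (stp_spec a u1 (h a) z1 S1).2 harc
          · rw [e2, e1]; exact (stp_spec u1 R1 z1 z2 S2).1 harc
        · by_cases hq2 : q = R1
          · rw [hq2] at harc hGadj ⊢
            rcases huniq2 r hrs hGadj with hx | hx <;> rw [hx] at harc ⊢
            · rw [e1, e2]; exact (stp_spec u1 R1 z1 z2 S2).2 harc
            · rw [e3, e2]; exact (stp_spec R1 R2 z2 z3 S3).1 harc
          · by_cases hq3 : q = R2
            · rw [hq3] at harc hGadj ⊢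
              rcases huniq3 r hrs hGadj with hx | hx <;> rw [hx] at harc ⊢
              · rw [e2, e3]; exact (stp_spec R1 R2 z2 z3 S3).2 harc
              · rw [eb, e3]; exact (stp_spec R2 b z3 (h b) S4).1 harc
            · by_cases hr1 : r = u1
              · rw [hr1] at harc hGadj ⊢
                rcases huniq1 q hqs hGadj.symm with hx | hx
                · rw [hx] at harc ⊢
                  rw [e1, ea]; exact (stp_spec a u1 (h a) z1 S1).1 harc
                · exact absurd hx hq2
              · by_cases hr2 : r = R1
                · rw [hr2] at harc hGadj ⊢
                  rcases huniq2 q hqs hGadj.symm with hx | hx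
                  · exact absurd hx hq1
                  · exact absurd hx hq3
                · by_cases hr3 : r = R2
                  · rw [hr3] at harc hGadj ⊢
                    rcases huniq3 q hqs hGadj.symm with hx | hx
                    · exact absurd hx hq2
                    · rw [hx] at harc ⊢
                      rw [e3, eb]; exact (stp_spec R2 b z3 (h b) S4).2 harc
                  · rw [eo q hq1 hq2 hq3, eo r hr1 hr2 hr3]
                    refine hh q r ?_ ?_ harc
                    · rw [hs', Finset.mem_sdiff]; exact ⟨hqs, by simp [hq1, hq2, hq3]⟩
                    · rw [hs', Finset.mem_sdiff]; exact ⟨hrs, by simp [hr1, hr2, hr3]⟩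
      · -- CASE B : path a u1 R1 R2 R3 R4 with four degree-2 vertices
        have hu4b : fl R3 < fl b := lt_of_le_of_ne hR3b (fun hq => hR3b' (finj hq))
        have hu4a : fl a < fl R3 := hu3a.trans hu3R
        obtain ⟨L4, hL4s, R4, hR4s, hadjL4, hadjR4, hL4a, hL4u, hu4R, hR4b, hembL4, hembR4, huniq4⟩ :=
          two_nbrs R3 hR3s hu4a hu4b
        have hL4' : L4 = R2 := by
          by_contra hq
          have hne4 : fl L4 ≠ fl R2 := fun hq2 => hq (finj hq2)
          rcases lt_or_gt_of_ne hne4 with hlt | hgt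
          · exact (hembL4 R2 hR2s ⟨hlt, hu3R⟩).elim
          · exact (hembR3 L4 hL4s ⟨hgt, hL4u⟩).elim
        rw [hL4'] at hadjL4 hembL4 huniq4
        have hu5a : fl a < fl R4 := hu4a.trans hu4R
        have d_au1 : a ≠ u1 := fun hq => (ne_of_lt hu1a) (congrArg fl hq)
        have d_au2 : a ≠ R1 := fun hq => (ne_of_lt hu2a) (congrArg fl hq)
        have d_au3 : a ≠ R2 := fun hq => (ne_of_lt hu3a) (congrArg fl hq)
        have d_au4 : a ≠ R3 := fun hq => (ne_of_lt hu4a) (congrArg fl hq)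
        have d_51 : R4 ≠ u1 := fun hq =>
          (ne_of_gt (hu1R.trans (hu2R.trans (hu3R.trans hu4R)))) (congrArg fl hq)
        have d_52 : R4 ≠ R1 := fun hq =>
          (ne_of_gt (hu2R.trans (hu3R.trans hu4R))) (congrArg fl hq)
        have d_53 : R4 ≠ R2 := fun hq => (ne_of_gt (hu3R.trans hu4R)) (congrArg fl hq)
        have d_54 : R4 ≠ R3 := fun hq => (ne_of_gt hu4R) (congrArg fl hq)
        have d_12 : u1 ≠ R1 := fun hq => (ne_of_lt hu1R) (congrArg fl hq)
        have d_13 : u1 ≠ R2 := fun hq => (ne_of_lt (hu1R.trans hu2R)) (congrArg fl hq)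
        have d_14 : u1 ≠ R3 := fun hq =>
          (ne_of_lt (hu1R.trans (hu2R.trans hu3R))) (congrArg fl hq)
        have d_23 : R1 ≠ R2 := fun hq => (ne_of_lt hu2R) (congrArg fl hq)
        have d_24 : R1 ≠ R3 := fun hq => (ne_of_lt (hu2R.trans hu3R)) (congrArg fl hq)
        have d_34 : R2 ≠ R3 := fun hq => (ne_of_lt hu3R) (congrArg fl hq)
        set s' := s \ {u1, R1, R2, R3} with hs'
        have hcard' : s'.card ≤ m := by
          have hsub : s' ⊆ s.erase u1 := by
            intro x hx
            rw [hs', Finset.mem_sdiff] at hx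
            rw [Finset.mem_erase]
            refine ⟨?_, hx.1⟩
            intro hq; exact hx.2 (by rw [hq]; simp)
          have hcc := Finset.card_le_card hsub
          rw [Finset.card_erase_of_mem hu1s] at hcc
          omega
        obtain ⟨h, hh⟩ := ih s' hcard'
        have ha' : a ∈ s' := by
          rw [hs', Finset.mem_sdiff]; exact ⟨has, by simp [d_au1, d_au2, d_au3, d_au4]⟩
        have h5' : R4 ∈ s' := by
          rw [hs', Finset.mem_sdiff]; exact ⟨hR4s, by simp [d_51, d_52, d_53, d_54]⟩
        obtain ⟨z1, z2, z3, z4, S1, S2, S3, S4, S5⟩ := W5 (h a) (h R4)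
          (if H.arc a u1 then true else false) (if H.arc u1 R1 then true else false)
          (if H.arc R1 R2 then true else false) (if H.arc R2 R3 then true else false)
          (if H.arc R3 R4 then true else false)
        have stp_spec : ∀ (x y : Fin n) (zx zy : ZMod 6),
            stp (if H.arc x y then true else false) zx zy →
            (H.arc x y → (zy - zx = 1 ∨ zy - zx = 2)) ∧
            (H.arc y x → (zx - zy = 1 ∨ zx - zy = 2)) := by
          intro x y zx zy hst
          constructor
          · intro hxy; rw [if_pos hxy] at hst; simpa [stp] using hst
          · intro hyx; rw [if_neg (H.asymm _ _ hyx)] at hst; simpa [stp] using hst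
        set h' : Fin n → ZMod 6 :=
          fun w => if w = u1 then z1 else if w = R1 then z2 else if w = R2 then z3
            else if w = R3 then z4 else h w
          with hh'
        have e1 : h' u1 = z1 := by rw [hh']; simp
        have e2 : h' R1 = z2 := by rw [hh']; simp [Ne.symm d_12]
        have e3 : h' R2 = z3 := by rw [hh']; simp [Ne.symm d_13, Ne.symm d_23]
        have e4 : h' R3 = z4 := by rw [hh']; simp [Ne.symm d_14, Ne.symm d_24, Ne.symm d_34]
        have eo : ∀ w, w ≠ u1 → w ≠ R1 → w ≠ R2 → w ≠ R3 → h' w = h w := by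
          intro w q1 q2 q3 q4; rw [hh']; simp [q1, q2, q3, q4]
        have ea : h' a = h a := eo a d_au1 d_au2 d_au3 d_au4
        have e5 : h' R4 = h R4 := eo R4 d_51 d_52 d_53 d_54
        refine ⟨h', ?_⟩
        intro q r hqs hrs harc
        have hGadj := orient.1 q r harc
        by_cases hq1 : q = u1
        · rw [hq1] at harc hGadj ⊢
          rcases huniq1 r hrs hGadj with hx | hx <;> rw [hx] at harc ⊢
          · rw [ea, e1]; exact (stp_spec a u1 (h a) z1 S1).2 harc
          · rw [e2, e1]; exact (stp_spec u1 R1 z1 z2 S2).1 harc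
        · by_cases hq2 : q = R1
          · rw [hq2] at harc hGadj ⊢
            rcases huniq2 r hrs hGadj with hx | hx <;> rw [hx] at harc ⊢
            · rw [e1, e2]; exact (stp_spec u1 R1 z1 z2 S2).2 harc
            · rw [e3, e2]; exact (stp_spec R1 R2 z2 z3 S3).1 harc
          · by_cases hq3 : q = R2
            · rw [hq3] at harc hGadj ⊢
              rcases huniq3 r hrs hGadj with hx | hx <;> rw [hx] at harc ⊢
              · rw [e2, e3]; exact (stp_spec R1 R2 z2 z3 S3).2 harc
              · rw [e4, e3]; exact (stp_spec R2 R3 z3 z4 S4).1 harc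
            · by_cases hq4 : q = R3
              · rw [hq4] at harc hGadj ⊢
                rcases huniq4 r hrs hGadj with hx | hx <;> rw [hx] at harc ⊢
                · rw [e3, e4]; exact (stp_spec R2 R3 z3 z4 S4).2 harc
                · rw [e5, e4]; exact (stp_spec R3 R4 z4 (h R4) S5).1 harc
              · by_cases hr1 : r = u1
                · rw [hr1] at harc hGadj ⊢
                  rcases huniq1 q hqs hGadj.symm with hx | hx
                  · rw [hx] at harc ⊢
                    rw [e1, ea]; exact (stp_spec a u1 (h a) z1 S1).1 harc
                  · exact absurd hx hq2
                · by_cases hr2 : r = R1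
                  · rw [hr2] at harc hGadj ⊢
                    rcases huniq2 q hqs hGadj.symm with hx | hx
                    · exact absurd hx hq1
                    · exact absurd hx hq3
                  · by_cases hr3 : r = R2
                    · rw [hr3] at harc hGadj ⊢
                      rcases huniq3 q hqs hGadj.symm with hx | hx
                      · exact absurd hx hq2
                      · exact absurd hx hq4
                    · by_cases hr4 : r = R3
                      · rw [hr4] at harc hGadj ⊢
                        rcases huniq4 q hqs hGadj.symm with hx | hx
                        · exact absurd hx hq3
                        · rw [hx] at harc ⊢
                          rw [e4, e5]; exact (stp_spec R3 R4 z4 (h R4) S5).2 harc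
                      · rw [eo q hq1 hq2 hq3 hq4, eo r hr1 hr2 hr3 hr4]
                        refine hh q r ?_ ?_ harc
                        · rw [hs', Finset.mem_sdiff]
                          exact ⟨hqs, by simp [hq1, hq2, hq3, hq4]⟩
                        · rw [hs', Finset.mem_sdiff]
                          exact ⟨hrs, by simp [hr1, hr2, hr3, hr4]⟩



end AuxPush

/-- Every orientation of every outerplanar graph with girth at least 5 can
be pushed to admit a homomorphism to the directed 3-cycle; moreover the bound 3 is tight:
some orientation of some outerplanar graph of girth at least 5 (an odd cycle) admits no
push-homomorphism to any oriented graph on at most 2 vertices. Hence the push chromatic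
number of the family of outerplanar graphs of girth at least 5 is 3. -/
theorem outerplanar_girth5_push_chromatic_three :
    (∀ (n : ℕ) (Gr : SimpleGraph (Fin n)), IsOuterplanar Gr → 5 ≤ Gr.girth →
      ∀ H : OGraph (Fin n), OGraph.IsOrientationOf H Gr →
        ∃ (S : Set (Fin n)) (f : Fin n → Fin 3), OGraph.IsHom (H.push S) C3 f) ∧
    (∃ (n : ℕ) (Gr : SimpleGraph (Fin n)) (H : OGraph (Fin n)),
      IsOuterplanar Gr ∧ 5 ≤ Gr.girth ∧ OGraph.IsOrientationOf H Gr ∧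
      ∀ (W : Type) [Fintype W], Fintype.card W ≤ 2 →
        ∀ (K : OGraph W) (S : Set (Fin n)) (f : Fin n → W),
          ¬ OGraph.IsHom (H.push S) K f) := by
  constructor
  · -- upper bound: push to C3
    intro n Gr hop hg H horient
    obtain ⟨fl, finj, nc⟩ := hop
    have noC3 := noC3_of_girth Gr hg
    have noC4 := noC4_of_girth Gr hg
    obtain ⟨h, hh⟩ := main_lemma Gr H fl finj nc horient noC3 noC4
      (Finset.univ.card) Finset.univ le_rfl
    refine ⟨{v | (h v).val % 2 = 1}, fun v => cZ (h v), ?_⟩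
    intro u v harc
    rcases harc with ⟨hx, hvu⟩ | ⟨hx, huv⟩
    · have hd := hh v u (Finset.mem_univ v) (Finset.mem_univ u) hvu
      have hx' : Xor' ((h u).val % 2 = 1) ((h v).val % 2 = 1) := hx
      exact LA (h u) (h v) hd hx'
    · have hd := hh u v (Finset.mem_univ u) (Finset.mem_univ v) huv
      have hx' : ¬ Xor' ((h u).val % 2 = 1) ((h v).val % 2 = 1) := hx
      exact LB (h u) (h v) hd hx'
  · -- tightness via the 5-cycle
    exact ⟨5, Gr5, H5, Gr5outer, gr5girth, H5orient, part2tight⟩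
end
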